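/- arXiv:1712.04130 — 10 statements merged into one kernel-verified Lean document; each statement's English description precedes it below -/
import Mathlib

section
/- Let R be a relation on X × Y and η ⊆ Y. Then (φ_R ∘ ψ_R)(χ) = χ holds for every proper subset χ of η if and only if (φ_R ∘ ψ_R)(γ) = γ holds for all γ of the form γ = η \ {y} with y ∈ η. -/
def psiR {X Y : Type*} (R : Set (X × Y)) (γ : Set Y) : Set X := {x | ∀ y ∈ γ, (x, y) ∈ R}

def phiR {X Y : Type*} (R : Set (X × Y)) (σ : Set X) : Set Y := {y | ∀ x ∈ σ, (x, y) ∈ R}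

lemma clos_extensive {X Y : Type*} (R : Set (X × Y)) (χ : Set Y) :
    χ ⊆ phiR R (psiR R χ) := fun y hy x hx => hx y hy

lemma clos_mono {X Y : Type*} (R : Set (X × Y)) {χ δ : Set Y} (h : χ ⊆ δ) :
    phiR R (psiR R χ) ⊆ phiR R (psiR R δ) := by
  intro y hy x hx
  exact hy x (fun y' hy' => hx y' (h hy'))

/-- Closure fixes every proper subset of η iff it fixes every set of the form η \ {y}, y ∈ η. -/
theorem proper_subsets_fixed_iff {X Y : Type*} [Fintype X] [Fintype Y]
    (R : Set (X × Y)) (η : Set Y) :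
    (∀ χ : Set Y, χ ⊂ η → phiR R (psiR R χ) = χ) ↔
    (∀ y ∈ η, phiR R (psiR R (η \ {y})) = η \ {y}) := by
  constructor
  · intro h y hy
    exact h _ (Set.sdiff_singleton_ssubset.mpr hy)
  · intro h χ hχ
    apply Set.Subset.antisymm _ (clos_extensive R χ)
    intro z hz
    obtain ⟨y0, hy0, hy0c⟩ := Set.exists_of_ssubset hχ
    have key : ∀ y ∈ η, y ∉ χ → z ∈ η \ {y} := by
      intro y hy hyc
      have hsub : χ ⊆ η \ {y} := fun a ha =>
        ⟨hχ.1 ha, fun hay => hyc (hay ▸ ha)⟩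
      have := clos_mono R hsub hz
      rwa [h y hy] at this
    have hzη : z ∈ η := (key y0 hy0 hy0c).1
    by_contra hzc
    exact (key z hzη hzc).2 rfl
end

section
/- Let R be a tight relation (no blank rows or columns) on nonempty finite sets X and Y. Then R is connected as a bipartite graph on X and Y if and only if the Dowker complex Ψ_R is path-connected (any two vertices of Ψ_R are joined by a sequence of edges of Ψ_R). -/
/-- Adjacency of the bipartite graph on X ⊔ Y determined by the relation R. -/
def bipAdj {X Y : Type*} (R : Set (X × Y)) (a b : X ⊕ Y) : Prop :=
  (∃ x y, a = Sum.inl x ∧ b = Sum.inr y ∧ (x, y) ∈ R) ∨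
  (∃ x y, a = Sum.inr y ∧ b = Sum.inl x ∧ (x, y) ∈ R)

/-- For a tight relation, connectivity of the bipartite graph is equivalent to
path-connectivity of the Dowker complex Ψ_R (vertices joined by edges,
where an edge joins two individuals sharing an attribute). -/
theorem tight_connected_iff_psi_path_connected {X Y : Type*}
    [Fintype X] [Fintype Y] [Nonempty X] [Nonempty Y] (R : Set (X × Y))
    (htX : ∀ x : X, ∃ y : Y, (x, y) ∈ R)
    (htY : ∀ y : Y, ∃ x : X, (x, y) ∈ R) :
    (∀ a b : X ⊕ Y, Relation.ReflTransGen (bipAdj R) a b) ↔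
    (∀ x x' : X,
      Relation.ReflTransGen (fun a b : X => ∃ y : Y, (a, y) ∈ R ∧ (b, y) ∈ R) x x') := by
  classical
  set S : X → X → Prop := fun a b => ∃ y : Y, (a, y) ∈ R ∧ (b, y) ∈ R with hS
  constructor
  · intro h x x'
    -- map each vertex to an X vertex
    let f : X ⊕ Y → X := fun a => match a with
      | Sum.inl x => x
      | Sum.inr y => (htY y).choose
    have key : ∀ a b : X ⊕ Y, bipAdj R a b → Relation.ReflTransGen S (f a) (f b) := by
      rintro a b (⟨x0, y0, rfl, rfl, hR⟩ | ⟨x0, y0, rfl, rfl, hR⟩)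
      · exact Relation.ReflTransGen.single ⟨y0, hR, (htY y0).choose_spec⟩
      · exact Relation.ReflTransGen.single ⟨y0, (htY y0).choose_spec, hR⟩
    exact Relation.ReflTransGen.lift' f key _ _ (h (Sum.inl x) (Sum.inl x'))
  · intro h a b
    -- lift an S-path to a bipartite path between inl vertices
    have lift : ∀ x x' : X, Relation.ReflTransGen S x x' →
        Relation.ReflTransGen (bipAdj R) (Sum.inl x) (Sum.inl x') := by
      intro x x' hp
      induction hp with
      | refl => exact Relation.ReflTransGen.refl
      | tail _ hstep ih =>
        obtain ⟨y, h1, h2⟩ := hstep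
        exact ih.tail (Or.inl ⟨_, y, rfl, rfl, h1⟩) |>.tail (Or.inr ⟨_, y, rfl, rfl, h2⟩)
    have toInl : ∀ a : X ⊕ Y, ∃ x : X, Relation.ReflTransGen (bipAdj R) a (Sum.inl x) := by
      rintro (x | y)
      · exact ⟨x, Relation.ReflTransGen.refl⟩
      · obtain ⟨x, hx⟩ := htY y
        exact ⟨x, Relation.ReflTransGen.single (Or.inr ⟨x, y, rfl, rfl, hx⟩)⟩
    obtain ⟨xa, hxa⟩ := toInl a
    obtain ⟨xb, hxb⟩ := toInl b
    have symmAdj : ∀ u v, bipAdj R u v → bipAdj R v u := by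
      rintro u v (⟨x0, y0, rfl, rfl, hR⟩ | ⟨x0, y0, rfl, rfl, hR⟩)
      · exact Or.inr ⟨x0, y0, rfl, rfl, hR⟩
      · exact Or.inl ⟨x0, y0, rfl, rfl, hR⟩
    have hxb' : Relation.ReflTransGen (bipAdj R) (Sum.inl xb) b :=
      (@Relation.ReflTransGen.stdSymm _ (bipAdj R) ⟨symmAdj⟩).symm _ _ hxb
    exact hxa.trans ((lift xa xb (h xa xb)).trans hxb')
end

section
/- Let R be a relation on X × Y with X, Y nonempty. R preserves attribute privacy (i.e., (φ_R ∘ ψ_R)(γ) = γ for all γ ∈ Φ_R ∪ {∅}) if and only if for all γ ∈ Φ_R and all y ∈ Y, ψ_R(γ) ⊆ ψ_R({y}) implies y ∈ γ. -/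
/-- R preserves attribute privacy: φ_R ∘ ψ_R is the identity on Φ_R ∪ {∅}. -/
def AttrPrivacy {X Y : Type*} (R : Set (X × Y)) : Prop :=
  ∀ γ : Set Y, ((psiR R γ).Nonempty ∨ γ = ∅) → phiR R (psiR R γ) = γ

/-- R preserves attribute privacy iff for all simplices γ of Φ_R and all attributes y,
ψ_R(γ) ⊆ ψ_R({y}) implies y ∈ γ. -/
theorem attr_privacy_iff_columns {X Y : Type*} [Fintype X] [Fintype Y]
    [Nonempty X] [Nonempty Y] (R : Set (X × Y)) :
    AttrPrivacy R ↔
    ∀ γ : Set Y, (psiR R γ).Nonempty →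
      ∀ y : Y, psiR R γ ⊆ psiR R {y} → y ∈ γ := by
  constructor
  · intro h γ hne y hsub
    have hγ : phiR R (psiR R γ) = γ := h γ (Or.inl hne)
    rw [← hγ]
    intro x hx
    exact hsub hx y rfl
  · intro h γ hne
    have hne' : (psiR R γ).Nonempty := by
      rcases hne with hne | rfl
      · exact hne
      · exact ⟨Classical.arbitrary X, fun y hy => absurd hy (Set.notMem_empty y)⟩
    ext y
    constructor
    · intro hy
      apply h γ hne' y
      intro x hx y' hy'
      rw [Set.mem_singleton_iff] at hy'
      subst hy'
      exact hy x hx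
    · intro hy x hx
      exact hx y hy
end

section
/- Let R be a relation on nonempty finite sets X and Y. If R preserves attribute privacy and every x ∈ X is uniquely identifiable via R (i.e., ψ_R(Y_x) = {x} for all x), then Φ_R contains no free faces. -/
def rowSet {X Y : Type*} (R : Set (X × Y)) (x : X) : Set Y := {y | (x, y) ∈ R}

def dowkerPhi {X Y : Type*} (R : Set (X × Y)) : Set (Set Y) :=
  {γ | ∃ x : X, ∀ y ∈ γ, (x, y) ∈ R}

def IsMaximalSimplex {X Y : Type*} (R : Set (X × Y)) (η : Set Y) : Prop :=
  η ∈ dowkerPhi R ∧ ∀ η' ∈ dowkerPhi R, η ⊆ η' → η' = η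

def IsFreeFace {X Y : Type*} (R : Set (X × Y)) (γ : Set Y) : Prop :=
  γ ∈ dowkerPhi R ∧ ∃! η : Set Y, IsMaximalSimplex R η ∧ γ ⊂ η

lemma exists_max_ext {X Y : Type*} [Fintype Y] (R : Set (X × Y)) (σ : Set Y)
    (hσ : σ ∈ dowkerPhi R) : ∃ η, IsMaximalSimplex R η ∧ σ ⊆ η := by
  have hfin : {η ∈ dowkerPhi R | σ ⊆ η}.Finite := Set.toFinite _
  have hne : {η ∈ dowkerPhi R | σ ⊆ η}.Nonempty := ⟨σ, hσ, subset_rfl⟩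
  obtain ⟨η, ⟨hηΦ, hση⟩, hmax⟩ := hfin.exists_maximalFor id _ hne
  refine ⟨η, ⟨hηΦ, fun η' hη' hsub => ?_⟩, hση⟩
  exact (hsub.antisymm (hmax ⟨hη', hση.trans hsub⟩ hsub)).symm

/-- If R preserves attribute privacy and every individual is uniquely identifiable,
then Φ_R contains no free faces. -/
theorem privacy_and_identifiable_implies_no_free_faces {X Y : Type*}
    [Fintype X] [Fintype Y] [Nonempty X] [Nonempty Y] (R : Set (X × Y))
    (hpriv : AttrPrivacy R)
    (hid : ∀ x : X, psiR R (rowSet R x) = {x}) :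
    ∀ γ : Set Y, ¬ IsFreeFace R γ := by
  rintro γ ⟨hγΦ, η, ⟨⟨hηΦ, hηmax⟩, hsub⟩, huniq⟩
  obtain ⟨x₀, hx₀⟩ := hηΦ
  have hrowΦ : ∀ x : X, rowSet R x ∈ dowkerPhi R := fun x => ⟨x, fun y hy => hy⟩
  have hηrow : rowSet R x₀ = η := hηmax _ (hrowΦ x₀) (fun y hy => hx₀ y hy)
  -- every x ∈ psiR R γ equals x₀
  have hkey : ∀ x ∈ psiR R γ, x = x₀ := by
    intro x hx
    have hγrow : γ ⊆ rowSet R x := fun y hy => hx y hy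
    obtain ⟨η', ⟨hη'Φ, hη'max⟩, hrowη'⟩ := exists_max_ext R (rowSet R x) (hrowΦ x)
    have hγη' : γ ⊂ η' := by
      refine ssubset_of_subset_of_ne (hγrow.trans hrowη') ?_
      rintro rfl
      exact hsub.ne (hη'max η ⟨x₀, hx₀⟩ hsub.subset).symm
    have : η' = η := huniq η' ⟨⟨hη'Φ, hη'max⟩, hγη'⟩
    subst this
    have hrowsub : rowSet R x ⊆ rowSet R x₀ := hηrow ▸ hrowη'
    have : x₀ ∈ psiR R (rowSet R x) := fun y hy => hrowsub hy
    rw [hid x] at this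
    exact this.symm
  have hx₀γ : x₀ ∈ psiR R γ := fun y hy => by
    have : y ∈ rowSet R x₀ := hηrow ▸ hsub.subset hy
    exact this
  have hpsi : psiR R γ = {x₀} := by
    apply Set.eq_singleton_iff_unique_mem.mpr ⟨hx₀γ, hkey⟩
  have := hpriv γ (Or.inl ⟨x₀, hx₀γ⟩)
  rw [hpsi] at this
  have hphi : phiR R {x₀} = rowSet R x₀ := by
    ext y; simp [phiR, rowSet]
  rw [hphi, hηrow] at this
  exact hsub.ne this.symm
end

section
/- Let R be a relation on X × Y with |X| = |Y| = n > 1. If R has no blank columns and preserves attribute privacy, then every x ∈ X is uniquely identifiable via R, i.e., ψ_R(Y_x) = {x} for every x ∈ X. -/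
open Finset

/-- Key combinatorial lemma: if `F` assigns rows (finsets of attributes inside `Y`)
to elements of `X`, every attribute of `Y` occurs in some row (covering), and the
extension property holds (for every `x ∈ X` and `y ∈ F x` there is a row containing
`(F x).erase y` and avoiding `y`), then `|Y| ≤ |X|`; and in case of equality the
rows are antisymmetric under inclusion. -/
theorem key_privacy_lemma {α β : Type*} [DecidableEq α] [DecidableEq β] :
    ∀ (n : ℕ) (X : Finset α) (Y : Finset β) (F : α → Finset β),
    Y.card = n → (∀ x ∈ X, F x ⊆ Y) →
    (∀ y ∈ Y, ∃ x ∈ X, y ∈ F x) →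
    (∀ x ∈ X, ∀ y ∈ F x, ∃ x' ∈ X, (F x).erase y ⊆ F x' ∧ y ∉ F x') →
    n ≤ X.card ∧ (X.card = n → ∀ x₀ ∈ X, ∀ x₁ ∈ X, F x₀ ⊆ F x₁ → x₀ = x₁) := by
  intro n
  induction n using Nat.strong_induction_on with
  | _ n IH =>
  -- Claim 1, proven uniformly in X, Y, F at this n.
  have C1 : ∀ (X : Finset α) (Y : Finset β) (F : α → Finset β),
      Y.card = n → (∀ x ∈ X, F x ⊆ Y) →
      (∀ y ∈ Y, ∃ x ∈ X, y ∈ F x) →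
      (∀ x ∈ X, ∀ y ∈ F x, ∃ x' ∈ X, (F x).erase y ⊆ F x' ∧ y ∉ F x') →
      n ≤ X.card := by
    intro X Y F hYcard hSub hCov hExt
    rcases n with _ | m
    · exact Nat.zero_le _
    by_contra hlt
    push_neg at hlt
    have hYne : Y.Nonempty := Finset.card_pos.mp (by omega)
    obtain ⟨ys, hys⟩ := hYne
    -- trace system on Y.erase ys
    set G : α → Finset β := fun x => (F x).erase ys with hG
    have hY' : (Y.erase ys).card = m := by
      rw [Finset.card_erase_of_mem hys, hYcard]
      omega
    have hSub' : ∀ x ∈ X, G x ⊆ Y.erase ys := by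
      intro x hx
      exact Finset.erase_subset_erase _ (hSub x hx)
    have hCov' : ∀ y ∈ Y.erase ys, ∃ x ∈ X, y ∈ G x := by
      intro y hy
      obtain ⟨hyne, hyY⟩ := Finset.mem_erase.mp hy
      obtain ⟨x, hx, hyx⟩ := hCov y hyY
      exact ⟨x, hx, Finset.mem_erase.mpr ⟨hyne, hyx⟩⟩
    have hExt' : ∀ x ∈ X, ∀ y ∈ G x, ∃ x' ∈ X, (G x).erase y ⊆ G x' ∧ y ∉ G x' := by
      intro x hx y hy
      obtain ⟨hyne, hyF⟩ := Finset.mem_erase.mp hy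
      obtain ⟨x', hx', hs, hn⟩ := hExt x hx y hyF
      refine ⟨x', hx', ?_, ?_⟩
      · intro a ha
        have ha1 := Finset.mem_erase.mp ha
        have ha2 := Finset.mem_erase.mp ha1.2
        exact Finset.mem_erase.mpr ⟨ha2.1, hs (Finset.mem_erase.mpr ⟨ha1.1, ha2.2⟩)⟩
      · intro hc
        exact hn (Finset.mem_of_mem_erase hc)
    obtain ⟨h1, h2⟩ := IH m (by omega) X (Y.erase ys) G hY' hSub' hCov' hExt'
    have hXm : X.card = m := le_antisymm (by omega) h1
    have hanti := h2 hXm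
    obtain ⟨xa, hxa, hya⟩ := hCov ys hys
    obtain ⟨v, hv, hs, hn⟩ := hExt xa hxa ys hya
    have hGsub : G xa ⊆ G v := by
      intro a ha
      have ha1 := Finset.mem_erase.mp ha
      exact Finset.mem_erase.mpr ⟨ha1.1, hs ha⟩
    have : xa = v := hanti xa hxa v hv hGsub
    subst this
    exact hn hya
  intro X Y F hYcard hSub hCov hExt
  refine ⟨C1 X Y F hYcard hSub hCov hExt, ?_⟩
  intro hXcard x₀ hx₀ x₁ hx₁ hsub01
  by_contra hne
  have hnpos : 0 < n := by
    rw [← hXcard]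
    exact Finset.card_pos.mpr ⟨x₀, hx₀⟩
  -- Helper: impossible to have two rows with big difference (delete the smaller row).
  have HDel : ∀ a ∈ X, ∀ b ∈ X, F a ⊆ F b → 2 ≤ (F b \ F a).card → False := by
    intro a ha b hb hab hcard2
    have hne_ab : a ≠ b := by
      rintro rfl
      simp only [Finset.sdiff_self, Finset.card_empty] at hcard2
      omega
    have hCov' : ∀ y ∈ Y, ∃ x ∈ X.erase a, y ∈ F x := by
      intro y hyY
      obtain ⟨x, hx, hy⟩ := hCov y hyY
      by_cases hxa : x = a
      · exact ⟨b, Finset.mem_erase.mpr ⟨Ne.symm hne_ab, hb⟩, hab (hxa ▸ hy)⟩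
      · exact ⟨x, Finset.mem_erase.mpr ⟨hxa, hx⟩, hy⟩
    have hExt' : ∀ x ∈ X.erase a, ∀ y ∈ F x,
        ∃ x' ∈ X.erase a, (F x).erase y ⊆ F x' ∧ y ∉ F x' := by
      intro x hx y hy
      have hxX := Finset.mem_of_mem_erase hx
      obtain ⟨x', hx', hs, hn⟩ := hExt x hxX y hy
      by_cases hx'a : x' = a
      · subst hx'a
        by_cases hyb : y ∈ F b
        · obtain ⟨y₂, hy₂mem, hy₂ne⟩ :=
            Finset.exists_mem_ne (by omega : 1 < (F b \ F x').card) y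
          have hy₂ := Finset.mem_sdiff.mp hy₂mem
          obtain ⟨w, hw, hsw, hnw⟩ := hExt b hb y hyb
          have hwa : w ≠ x' := by
            rintro rfl
            exact hy₂.2 (hsw (Finset.mem_erase.mpr ⟨hy₂ne, hy₂.1⟩))
          refine ⟨w, Finset.mem_erase.mpr ⟨hwa, hw⟩, ?_, hnw⟩
          intro c hc
          have hc1 := Finset.mem_erase.mp hc
          have hca : c ∈ F x' := hs hc
          exact hsw (Finset.mem_erase.mpr ⟨hc1.1, hab hca⟩)
        · exact ⟨b, Finset.mem_erase.mpr ⟨Ne.symm hne_ab, hb⟩, hs.trans hab, hyb⟩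
      · exact ⟨x', Finset.mem_erase.mpr ⟨hx'a, hx'⟩, hs, hn⟩
    have := C1 (X.erase a) Y F hYcard (fun x hx => hSub x (Finset.mem_of_mem_erase hx))
      hCov' hExt'
    rw [Finset.card_erase_of_mem ha, hXcard] at this
    omega
  rcases Nat.lt_or_ge (F x₁ \ F x₀).card 2 with hlt | hge
  · rcases Nat.lt_or_ge (F x₁ \ F x₀).card 1 with h0 | h1
    · -- duplicate rows: delete x₁
      have hemp : F x₁ \ F x₀ = ∅ := Finset.card_eq_zero.mp (by omega)
      have heq : F x₀ = F x₁ :=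
        subset_antisymm hsub01 (Finset.sdiff_eq_empty_iff_subset.mp hemp)
      have hCov' : ∀ y ∈ Y, ∃ x ∈ X.erase x₁, y ∈ F x := by
        intro y hyY
        obtain ⟨x, hx, hy⟩ := hCov y hyY
        by_cases hxx : x = x₁
        · exact ⟨x₀, Finset.mem_erase.mpr ⟨hne, hx₀⟩, by rw [heq]; exact hxx ▸ hy⟩
        · exact ⟨x, Finset.mem_erase.mpr ⟨hxx, hx⟩, hy⟩
      have hExt' : ∀ x ∈ X.erase x₁, ∀ y ∈ F x,
          ∃ x' ∈ X.erase x₁, (F x).erase y ⊆ F x' ∧ y ∉ F x' := by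
        intro x hx y hy
        obtain ⟨x', hx', hs, hn⟩ := hExt x (Finset.mem_of_mem_erase hx) y hy
        by_cases hx'x : x' = x₁
        · refine ⟨x₀, Finset.mem_erase.mpr ⟨hne, hx₀⟩, ?_, ?_⟩
          · rw [heq]; exact hx'x ▸ hs
          · rw [heq]; exact hx'x ▸ hn
        · exact ⟨x', Finset.mem_erase.mpr ⟨hx'x, hx'⟩, hs, hn⟩
      have := C1 (X.erase x₁) Y F hYcard
        (fun x hx => hSub x (Finset.mem_of_mem_erase hx)) hCov' hExt'
      rw [Finset.card_erase_of_mem hx₁, hXcard] at this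
      omega
    · -- difference is a single attribute ys
      have hc1 : (F x₁ \ F x₀).card = 1 := by omega
      obtain ⟨ys, hys⟩ := Finset.card_eq_one.mp hc1
      have hymem : ys ∈ F x₁ ∧ ys ∉ F x₀ := by
        have : ys ∈ F x₁ \ F x₀ := hys ▸ Finset.mem_singleton_self ys
        exact Finset.mem_sdiff.mp this
      have hF0eq : (F x₁).erase ys = F x₀ := by
        ext a
        simp only [Finset.mem_erase]
        constructor
        · rintro ⟨hne', hmem⟩
          by_contra hna
          have : a ∈ F x₁ \ F x₀ := Finset.mem_sdiff.mpr ⟨hmem, hna⟩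
          rw [hys] at this
          exact hne' (Finset.mem_singleton.mp this)
        · intro haF0
          exact ⟨fun h => hymem.2 (h ▸ haF0), hsub01 haF0⟩
      have hysY : ys ∈ Y := hSub x₁ hx₁ hymem.1
      by_cases hcase : ∃ xa ∈ X, xa ≠ x₁ ∧ ys ∈ F xa
      · -- some other row also contains ys : contract along ys and delete x₁
        obtain ⟨xa, hxa, hxane, hysa⟩ := hcase
        set G : α → Finset β := fun x => (F x).erase ys with hG
        have hSubV : ∀ x ∈ X.erase x₁, G x ⊆ Y.erase ys := by
          intro x hx
          exact Finset.erase_subset_erase _ (hSub x (Finset.mem_of_mem_erase hx))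
        have hCovV : ∀ y ∈ Y.erase ys, ∃ x ∈ X.erase x₁, y ∈ G x := by
          intro y hy
          obtain ⟨hyne, hyY⟩ := Finset.mem_erase.mp hy
          obtain ⟨x, hx, hyx⟩ := hCov y hyY
          by_cases hxx : x = x₁
          · refine ⟨x₀, Finset.mem_erase.mpr ⟨hne, hx₀⟩, ?_⟩
            have : y ∈ F x₀ := by
              rw [← hF0eq]
              exact Finset.mem_erase.mpr ⟨hyne, hxx ▸ hyx⟩
            exact Finset.mem_erase.mpr ⟨hyne, this⟩
          · exact ⟨x, Finset.mem_erase.mpr ⟨hxx, hx⟩, Finset.mem_erase.mpr ⟨hyne, hyx⟩⟩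
        have hExtV : ∀ x ∈ X.erase x₁, ∀ y ∈ G x,
            ∃ x' ∈ X.erase x₁, (G x).erase y ⊆ G x' ∧ y ∉ G x' := by
          intro x hx y hy
          obtain ⟨hyne, hyF⟩ := Finset.mem_erase.mp hy
          obtain ⟨x', hx', hs, hn⟩ := hExt x (Finset.mem_of_mem_erase hx) y hyF
          by_cases hx'x : x' = x₁
          · subst hx'x
            refine ⟨x₀, Finset.mem_erase.mpr ⟨hne, hx₀⟩, ?_, ?_⟩
            · intro a ha
              have ha1 := Finset.mem_erase.mp ha
              have ha2 := Finset.mem_erase.mp ha1.2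
              have haF1 : a ∈ F x' := hs (Finset.mem_erase.mpr ⟨ha1.1, ha2.2⟩)
              have haF0 : a ∈ F x₀ := by
                rw [← hF0eq]
                exact Finset.mem_erase.mpr ⟨ha2.1, haF1⟩
              exact Finset.mem_erase.mpr ⟨ha2.1, haF0⟩
            · intro hc
              have : y ∈ F x₀ := Finset.mem_of_mem_erase hc
              exact hn (hsub01 this)
          · refine ⟨x', Finset.mem_erase.mpr ⟨hx'x, hx'⟩, ?_, ?_⟩
            · intro a ha
              have ha1 := Finset.mem_erase.mp ha
              have ha2 := Finset.mem_erase.mp ha1.2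
              exact Finset.mem_erase.mpr ⟨ha2.1, hs (Finset.mem_erase.mpr ⟨ha1.1, ha2.2⟩)⟩
            · intro hc
              exact hn (Finset.mem_of_mem_erase hc)
        have hYV : (Y.erase ys).card = n - 1 := by
          rw [Finset.card_erase_of_mem hysY, hYcard]
        have hXV : (X.erase x₁).card = n - 1 := by
          rw [Finset.card_erase_of_mem hx₁, hXcard]
        obtain ⟨_, h2⟩ := IH (n - 1) (by omega) (X.erase x₁) (Y.erase ys) G hYV hSubV hCovV hExtV
        have hantiV := h2 hXV
        obtain ⟨v, hv, hs, hnv⟩ := hExt xa hxa ys hysa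
        have hvx₁ : v ≠ x₁ := by
          rintro rfl
          exact hnv hymem.1
        have hGsub : G xa ⊆ G v := by
          intro a ha
          have ha1 := Finset.mem_erase.mp ha
          exact Finset.mem_erase.mpr ⟨ha1.1, hs ha⟩
        have : xa = v := hantiV xa (Finset.mem_erase.mpr ⟨hxane, hxa⟩) v
          (Finset.mem_erase.mpr ⟨hvx₁, hv⟩) hGsub
        subst this
        exact hnv hysa
      · -- ys appears only in row x₁
        push_neg at hcase
        have hFx₁ : F x₁ = {ys} := by
          apply Finset.eq_singleton_iff_unique_mem.mpr
          refine ⟨hymem.1, ?_⟩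
          intro a ha
          by_contra hane
          obtain ⟨w, hw, hsw, hnw⟩ := hExt x₁ hx₁ a ha
          have hysw : ys ∈ F w := hsw (Finset.mem_erase.mpr ⟨fun h => hane h.symm, hymem.1⟩)
          have hwx₁ : w = x₁ := by
            by_contra hne'
            exact hcase w hw hne' hysw
          exact hnw (hwx₁ ▸ ha)
        have hFx₀ : F x₀ = ∅ := by
          rw [← hF0eq, hFx₁, Finset.erase_singleton]
        by_cases h2r : ∃ x₂ ∈ X, 2 ≤ (F x₂).card
        · obtain ⟨x₂, hxx, hcc⟩ := h2r
          refine HDel x₀ hx₀ x₂ hxx (by rw [hFx₀]; exact Finset.empty_subset _) ?_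
          rw [hFx₀, Finset.sdiff_empty]
          exact hcc
        · push_neg at h2r
          -- all rows have at most one element : pigeonhole
          have hx₀mem : x₀ ∈ X.erase x₁ := Finset.mem_erase.mpr ⟨hne, hx₀⟩
          have hTcard : ((X.erase x₁).erase x₀).card = n - 2 := by
            rw [Finset.card_erase_of_mem hx₀mem, Finset.card_erase_of_mem hx₁, hXcard]
            omega
          have hScard : (Y.erase ys).card = n - 1 := by
            rw [Finset.card_erase_of_mem hysY, hYcard]
          have hn2 : 2 ≤ n := by
            rw [← hXcard]
            exact Finset.one_lt_card.mpr ⟨x₀, hx₀, x₁, hx₁, hne⟩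
          have hmaps : ∀ y ∈ Y.erase ys, ∃ x, x ∈ (X.erase x₁).erase x₀ ∧ y ∈ F x := by
            intro y hyS
            obtain ⟨hyne, hyY⟩ := Finset.mem_erase.mp hyS
            obtain ⟨x, hx, hyx⟩ := hCov y hyY
            have hxx₁ : x ≠ x₁ := by
              rintro rfl
              rw [hFx₁] at hyx
              exact hyne (Finset.mem_singleton.mp hyx)
            have hxx₀ : x ≠ x₀ := by
              rintro rfl
              rw [hFx₀] at hyx
              exact absurd hyx (Finset.notMem_empty y)
            exact ⟨x, Finset.mem_erase.mpr ⟨hxx₀, Finset.mem_erase.mpr ⟨hxx₁, hx⟩⟩, hyx⟩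
          classical
          let f : β → α := fun y =>
            if h : ∃ x, x ∈ (X.erase x₁).erase x₀ ∧ y ∈ F x then h.choose else x₀
          have hfT : ∀ y ∈ Y.erase ys, f y ∈ (X.erase x₁).erase x₀ ∧ y ∈ F (f y) := by
            intro y hy
            have h := hmaps y hy
            simp only [f, dif_pos h]
            exact h.choose_spec
          have hlt' : ((X.erase x₁).erase x₀).card < (Y.erase ys).card := by omega
          obtain ⟨y, hy, y', hy', hyy', heqf⟩ :=
            Finset.exists_ne_map_eq_of_card_lt_of_maps_to hlt' (fun y hy => (hfT y hy).1)
          have hbig : 1 < (F (f y)).card :=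
            Finset.one_lt_card.mpr ⟨y, (hfT y hy).2, y', heqf ▸ (hfT y' hy').2, hyy'⟩
          have hfyX : f y ∈ X :=
            Finset.mem_of_mem_erase (Finset.mem_of_mem_erase (hfT y hy).1)
          have := h2r (f y) hfyX
          omega
  · exact HDel x₀ hx₀ x₁ hx₁ hsub01 hge

/-- A square relation (|X| = |Y| > 1) with no blank columns that preserves attribute
privacy has every individual uniquely identifiable. -/
theorem square_privacy_implies_identifiable {X Y : Type*} [Fintype X] [Fintype Y]
    (R : Set (X × Y))
    (hcard : Fintype.card X = Fintype.card Y)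
    (hgt : 1 < Fintype.card X)
    (hcol : ∀ y : Y, ∃ x : X, (x, y) ∈ R)
    (hpriv : AttrPrivacy R) :
    ∀ x : X, psiR R (rowSet R x) = {x} := by
  classical
  set F : X → Finset Y := fun x => Finset.univ.filter (fun y => (x, y) ∈ R) with hFdef
  have hmemF : ∀ (x : X) (y : Y), y ∈ F x ↔ (x, y) ∈ R := by
    intro x y
    simp [hFdef]
  have hCov : ∀ y ∈ (Finset.univ : Finset Y), ∃ x ∈ (Finset.univ : Finset X), y ∈ F x := by
    intro y _
    obtain ⟨x, hx⟩ := hcol y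
    exact ⟨x, Finset.mem_univ x, (hmemF x y).mpr hx⟩
  have hExt : ∀ x ∈ (Finset.univ : Finset X), ∀ y ∈ F x,
      ∃ x' ∈ (Finset.univ : Finset X), (F x).erase y ⊆ F x' ∧ y ∉ F x' := by
    intro x _ y hy
    have hxy : (x, y) ∈ R := (hmemF x y).mp hy
    set γ : Set Y := {y' | (x, y') ∈ R ∧ y' ≠ y} with hγ
    have hxψ : x ∈ psiR R γ := fun y' hy' => hy'.1
    have hpr := hpriv γ (Or.inl ⟨x, hxψ⟩)
    have hyγ : y ∉ γ := fun hc => hc.2 rfl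
    rw [← hpr] at hyγ
    simp only [phiR, Set.mem_setOf_eq] at hyγ
    push_neg at hyγ
    obtain ⟨x', hx'ψ, hx'y⟩ := hyγ
    refine ⟨x', Finset.mem_univ x', ?_, ?_⟩
    · intro a ha
      obtain ⟨hane, haF⟩ := Finset.mem_erase.mp ha
      exact (hmemF x' a).mpr (hx'ψ a ⟨(hmemF x a).mp haF, hane⟩)
    · exact fun hc => hx'y ((hmemF x' y).mp hc)
  have hSub : ∀ x ∈ (Finset.univ : Finset X), F x ⊆ Finset.univ :=
    fun x _ => Finset.subset_univ _
  have hYcard : (Finset.univ : Finset Y).card = Fintype.card Y := Finset.card_univ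
  obtain ⟨_, h2⟩ := key_privacy_lemma (Fintype.card Y) Finset.univ Finset.univ F
    hYcard hSub hCov hExt
  have hanti := h2 (by rw [Finset.card_univ, hcard])
  intro x
  ext x'
  simp only [Set.mem_singleton_iff]
  constructor
  · intro hx'
    have hsub : F x ⊆ F x' := by
      intro a ha
      exact (hmemF x' a).mpr (hx' a ((hmemF x a).mp ha))
    exact (hanti x (Finset.mem_univ x) x' (Finset.mem_univ x') hsub).symm
  · rintro rfl
    exact fun y hy => hy
end

section
/- Let R be a relation on X × Y with no blank columns. If |Y| > |X| ≥ 1, then R does not preserve attribute privacy: there exists γ with ψ_R(γ) ≠ ∅ or γ = ∅ such that (φ_R ∘ ψ_R)(γ) ≠ γ. -/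
open Finset

section AuxPrivacy

variable {Y : Type*} [Fintype Y] [DecidableEq Y]

/-- The set of one-point extensions of `δ` inside the family `E`. -/
private def extF (E : Finset (Finset Y)) (δ : Finset Y) : Finset Y :=
  univ.filter (fun y => y ∉ δ ∧ insert y δ ∈ E)

/-- The link of a vertex `v` in the family `E`. -/
private def linkF (E : Finset (Finset Y)) (v : Y) : Finset (Finset Y) :=
  univ.filter (fun σ => v ∉ σ ∧ insert v σ ∈ E)

private lemma extF_insert (E : Finset (Finset Y)) (v : Y) (δ : Finset Y) (hv : v ∈ δ) :
    extF E δ = extF (linkF E v) (δ.erase v) := by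
  ext y
  simp only [extF, linkF, mem_filter, mem_univ, true_and]
  constructor
  · rintro ⟨hyδ, hins⟩
    have hyv : y ≠ v := fun h => hyδ (h ▸ hv)
    refine ⟨fun h => hyδ (Finset.mem_of_mem_erase h), ?_, ?_⟩
    · intro hmem
      rcases Finset.mem_insert.mp hmem with h | h
      · exact hyv h.symm
      · exact (Finset.notMem_erase v δ) h
    · rw [Finset.insert_comm, Finset.insert_erase hv]
      exact hins
  · rintro ⟨hyδ', hvnot, hins⟩
    have hvy : v ≠ y := by
      intro h
      apply hvnot
      rw [h]
      exact Finset.mem_insert_self y _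
    have hyδ : y ∉ δ := by
      intro h
      exact hyδ' (Finset.mem_erase.mpr ⟨fun hh => hvy hh.symm, h⟩)
    refine ⟨hyδ, ?_⟩
    rwa [Finset.insert_comm, Finset.insert_erase hv] at hins

/-- Base case: a downward closed family with at most one vertex. -/
private lemma aux_base (E : Finset (Finset Y))
    (hdown : ∀ s ∈ E, ∀ t, t ⊆ s → t ∈ E) (hne : E.Nonempty)
    (hc : (E.sup id).card ≤ 1) :
    ∃ q : Finset Y → ℚ, (∀ δ, 0 ≤ q δ) ∧
      (∀ δ, q δ ≠ 0 → δ ∈ E ∧ (extF E δ).card ≤ 1) ∧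
      (∑ δ : Finset Y, q δ) = 1 ∧
      (∀ δ : Finset Y, q δ ≤ 1/(δ.card + 1)) ∧
      (E.sup id ≠ ∅ → q (E.sup id) = 0) := by
  obtain ⟨s, hs⟩ := hne
  have hempty : (∅ : Finset Y) ∈ E := hdown s hs ∅ (Finset.empty_subset s)
  refine ⟨fun δ => if δ = ∅ then 1 else 0, ?_, ?_, ?_, ?_, ?_⟩
  · intro δ; dsimp only; split <;> norm_num
  · intro δ hδ
    have hδe : δ = ∅ := by by_contra h; simp only [h, if_false] at hδ; exact hδ rfl
    subst hδe
    refine ⟨hempty, ?_⟩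
    have hsub : extF E ∅ ⊆ E.sup id := by
      intro y hy
      simp only [extF, mem_filter, mem_univ, true_and] at hy
      have h1 : ({y} : Finset Y) ∈ E := by
        have := hy.2
        rwa [Finset.insert_empty] at this
      exact Finset.mem_sup.mpr ⟨{y}, h1, Finset.mem_singleton_self y⟩
    exact le_trans (Finset.card_le_card hsub) hc
  · simp
  · intro δ
    dsimp only
    split
    · rename_i h; subst h; simp
    · positivity
  · intro hV
    dsimp only
    rw [if_neg hV]

/-- Key lemma: existence of a "stopping distribution" supported on sets of a
nonempty downward closed family having at most one one-point extension, with
weights bounded by `1/(|δ|+1)`. -/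
private lemma aux_S (n : ℕ) (E : Finset (Finset Y))
    (hn : (E.sup id).card ≤ n)
    (hdown : ∀ s ∈ E, ∀ t, t ⊆ s → t ∈ E) (hne : E.Nonempty) :
    ∃ q : Finset Y → ℚ, (∀ δ, 0 ≤ q δ) ∧
      (∀ δ, q δ ≠ 0 → δ ∈ E ∧ (extF E δ).card ≤ 1) ∧
      (∑ δ : Finset Y, q δ) = 1 ∧
      (∀ δ : Finset Y, q δ ≤ 1/(δ.card + 1)) ∧
      (E.sup id ≠ ∅ → q (E.sup id) = 0) := by
  induction n generalizing E with
  | zero => exact aux_base E hdown hne (le_trans hn (by norm_num))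
  | succ n IH =>
    by_cases hc : (E.sup id).card ≤ 1
    · exact aux_base E hdown hne hc
    · set V : Finset Y := E.sup id with hV
      have hN2 : 2 ≤ V.card := by omega
      have hmemE_subV : ∀ s ∈ E, s ⊆ V := fun s hs => Finset.le_sup (f := id) hs
      have hsingleton : ∀ v ∈ V, ({v} : Finset Y) ∈ E := by
        intro v hv
        rcases Finset.mem_sup.mp hv with ⟨s, hs, hvs⟩
        exact hdown s hs {v} (Finset.singleton_subset_iff.mpr hvs)
      have hlink_down : ∀ v : Y, ∀ s ∈ linkF E v, ∀ t, t ⊆ s → t ∈ linkF E v := by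
        intro v s hs t hts
        simp only [linkF, mem_filter, mem_univ, true_and] at hs ⊢
        refine ⟨fun h => hs.1 (hts h), ?_⟩
        exact hdown _ hs.2 _ (Finset.insert_subset_insert v hts)
      have hlink_ne : ∀ v ∈ V, (linkF E v).Nonempty := by
        intro v hv
        refine ⟨∅, ?_⟩
        simp only [linkF, mem_filter, mem_univ, true_and]
        refine ⟨Finset.notMem_empty v, ?_⟩
        rw [Finset.insert_empty]
        exact hsingleton v hv
      have hlink_sub : ∀ v : Y, ∀ s ∈ linkF E v, s ⊆ V.erase v := by
        intro v s hs
        simp only [linkF, mem_filter, mem_univ, true_and] at hs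
        have hsE : s ∈ E := hdown _ hs.2 s (Finset.subset_insert v s)
        intro z hz
        exact Finset.mem_erase.mpr ⟨fun h => hs.1 (h ▸ hz), hmemE_subV s hsE hz⟩
      have hlink_sup : ∀ v : Y, (linkF E v).sup id ⊆ V.erase v := by
        intro v
        exact Finset.sup_le (fun s hs => hlink_sub v s hs)
      have hlink_card : ∀ v ∈ V, (((linkF E v).sup id)).card ≤ n := by
        intro v hv
        have h1 : ((linkF E v).sup id).card ≤ (V.erase v).card :=
          Finset.card_le_card (hlink_sup v)
        have h2 : (V.erase v).card = V.card - 1 := Finset.card_erase_of_mem hv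
        omega
      have hQex : ∀ v : Y, ∃ q : Finset Y → ℚ, v ∈ V →
          ((∀ δ, 0 ≤ q δ) ∧
           (∀ δ, q δ ≠ 0 → δ ∈ linkF E v ∧ (extF (linkF E v) δ).card ≤ 1) ∧
           (∑ δ : Finset Y, q δ) = 1 ∧
           (∀ δ : Finset Y, q δ ≤ 1/(δ.card + 1)) ∧
           ((linkF E v).sup id ≠ ∅ → q ((linkF E v).sup id) = 0)) := by
        intro v
        by_cases hv : v ∈ V
        · obtain ⟨q, hq⟩ := IH (linkF E v) (hlink_card v hv) (hlink_down v) (hlink_ne v hv)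
          exact ⟨q, fun _ => hq⟩
        · exact ⟨0, fun h => absurd h hv⟩
      choose Q hQ using hQex
      have hNQ0 : (0:ℚ) < (V.card : ℚ) := by exact_mod_cast (by omega : 0 < V.card)
      set q : Finset Y → ℚ :=
        fun δ => (∑ v ∈ V, if v ∈ δ then Q v (δ.erase v) else 0) / (V.card : ℚ) with hq
      have hnonneg : ∀ δ, 0 ≤ q δ := by
        intro δ
        apply div_nonneg _ (le_of_lt hNQ0)
        apply Finset.sum_nonneg
        intro v hv
        split
        · exact (hQ v hv).1 _
        · exact le_refl 0
      have hsupp : ∀ δ, q δ ≠ 0 → δ ∈ E ∧ (extF E δ).card ≤ 1 := by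
        intro δ hδ
        have hnum : (∑ v ∈ V, if v ∈ δ then Q v (δ.erase v) else 0) ≠ 0 := by
          intro h; apply hδ; rw [hq]; simp [h]
        obtain ⟨v, hvV, hvne⟩ := Finset.exists_ne_zero_of_sum_ne_zero hnum
        have hvδ : v ∈ δ := by
          by_contra h; simp [h] at hvne
        have hQne : Q v (δ.erase v) ≠ 0 := by simpa [hvδ] using hvne
        obtain ⟨hmem, hext⟩ := (hQ v hvV).2.1 _ hQne
        have hEδ : δ ∈ E := by
          simp only [linkF, mem_filter, mem_univ, true_and] at hmem
          have := hmem.2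
          rwa [Finset.insert_erase hvδ] at this
        refine ⟨hEδ, ?_⟩
        rw [extF_insert E v δ hvδ]
        exact hext
      have hsum : (∑ δ : Finset Y, q δ) = 1 := by
        have h1 : ∀ v ∈ V, (∑ δ : Finset Y, if v ∈ δ then Q v (δ.erase v) else 0) = 1 := by
          intro v hv
          have hstep1 : (∑ δ : Finset Y, if v ∈ δ then Q v (δ.erase v) else 0)
              = ∑ δ ∈ univ.filter (fun δ : Finset Y => v ∈ δ), Q v (δ.erase v) := by
            rw [Finset.sum_filter]
          have hstep2 : (∑ δ ∈ univ.filter (fun δ : Finset Y => v ∈ δ), Q v (δ.erase v))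
              = ∑ σ ∈ univ.filter (fun σ : Finset Y => v ∉ σ), Q v σ := by
            apply Finset.sum_nbij' (i := fun δ => δ.erase v) (j := fun σ => insert v σ)
            · intro a ha
              simp only [mem_filter, mem_univ, true_and] at ha ⊢
              exact Finset.notMem_erase v a
            · intro a ha
              simp only [mem_filter, mem_univ, true_and] at ha ⊢
              exact Finset.mem_insert_self v a
            · intro a ha
              simp only [mem_filter, mem_univ, true_and] at ha
              exact Finset.insert_erase ha
            · intro a ha
              simp only [mem_filter, mem_univ, true_and] at ha
              exact Finset.erase_insert ha
            · intro a ha; rfl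
          have hstep3 : (∑ σ ∈ univ.filter (fun σ : Finset Y => v ∉ σ), Q v σ)
              = ∑ σ : Finset Y, Q v σ := by
            rw [← Finset.sum_filter_add_sum_filter_not univ (fun σ : Finset Y => v ∉ σ) (Q v)]
            have hzero : (∑ σ ∈ univ.filter (fun σ : Finset Y => ¬ v ∉ σ), Q v σ) = 0 := by
              apply Finset.sum_eq_zero
              intro σ hσ
              simp only [mem_filter, mem_univ, true_and, not_not] at hσ
              by_contra h0
              have hmem := ((hQ v hv).2.1 _ h0).1
              simp only [linkF, mem_filter, mem_univ, true_and] at hmem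
              exact hmem.1 hσ
            rw [hzero, add_zero]
          rw [hstep1, hstep2, hstep3, (hQ v hv).2.2.1]
        calc (∑ δ : Finset Y, q δ)
            = ∑ δ : Finset Y, (∑ v ∈ V, if v ∈ δ then Q v (δ.erase v) else 0) / (V.card : ℚ) :=
              rfl
          _ = (∑ δ : Finset Y, ∑ v ∈ V, if v ∈ δ then Q v (δ.erase v) else 0) / (V.card : ℚ) := by
              rw [← Finset.sum_div]
          _ = (∑ v ∈ V, ∑ δ : Finset Y, if v ∈ δ then Q v (δ.erase v) else 0) / (V.card : ℚ) := by
              rw [Finset.sum_comm]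
          _ = ((V.card : ℚ) * 1) / (V.card : ℚ) := by
              rw [Finset.sum_congr rfl h1]; simp
          _ = 1 := by field_simp
      have hqV : q V = 0 := by
        have hz : ∀ v ∈ V, (if v ∈ V then Q v (V.erase v) else 0) = 0 := by
          intro v hv
          rw [if_pos hv]
          by_cases hW : V.erase v = (linkF E v).sup id
          · have htop := (hQ v hv).2.2.2.2
            have hcne : V.erase v ≠ ∅ := by
              have : (V.erase v).card = V.card - 1 := Finset.card_erase_of_mem hv
              intro h
              rw [h] at this
              simp at this
              omega
            rw [hW] at hcne ⊢
            exact htop hcne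
          · by_contra h0
            have hmem := ((hQ v hv).2.1 _ h0).1
            have hsub : V.erase v ⊆ (linkF E v).sup id := Finset.le_sup (f := id) hmem
            exact hW (Finset.Subset.antisymm hsub (hlink_sup v))
        have hnum : (∑ v ∈ V, if v ∈ V then Q v (V.erase v) else 0) = 0 :=
          Finset.sum_eq_zero hz
        have hqdef : q V = (∑ v ∈ V, if v ∈ V then Q v (V.erase v) else 0) / (V.card : ℚ) := rfl
        rw [hqdef, hnum, zero_div]
      have hbound : ∀ δ : Finset Y, q δ ≤ 1/(δ.card + 1) := by
        intro δ
        by_cases h0 : q δ = 0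
        · rw [h0]; positivity
        · have hδE : δ ∈ E := (hsupp δ h0).1
          have hδV : δ ⊆ V := hmemE_subV δ hδE
          by_cases hδeq : δ = V
          · exact absurd (hδeq ▸ hqV) h0
          · have hcard : δ.card + 1 ≤ V.card := by
              have : δ.card < V.card :=
                Finset.card_lt_card (Finset.ssubset_iff_subset_ne.mpr ⟨hδV, hδeq⟩)
              omega
            have hterm : ∀ v ∈ V, (if v ∈ δ then Q v (δ.erase v) else 0)
                ≤ (if v ∈ δ then 1/(δ.card : ℚ) else 0) := by
              intro v hv
              by_cases hvδ : v ∈ δ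
              · rw [if_pos hvδ, if_pos hvδ]
                have hb := (hQ v hv).2.2.2.1 (δ.erase v)
                have hc1 : 1 ≤ δ.card := Finset.card_pos.mpr ⟨v, hvδ⟩
                have hcast : ((δ.erase v).card : ℚ) + 1 = (δ.card : ℚ) := by
                  rw [Finset.card_erase_of_mem hvδ]
                  push_cast [Nat.cast_sub hc1]
                  ring
                rwa [hcast] at hb
              · rw [if_neg hvδ, if_neg hvδ]
            have hsum1 : (∑ v ∈ V, if v ∈ δ then Q v (δ.erase v) else 0) ≤ 1 := by
              calc (∑ v ∈ V, if v ∈ δ then Q v (δ.erase v) else 0)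
                  ≤ ∑ v ∈ V, (if v ∈ δ then 1/(δ.card : ℚ) else 0) :=
                    Finset.sum_le_sum hterm
                _ = ((V.filter (fun v => v ∈ δ)).card : ℚ) * (1/(δ.card : ℚ)) := by
                    rw [← Finset.sum_filter]
                    rw [Finset.sum_const, nsmul_eq_mul]
                _ ≤ 1 := by
                    have hle : (V.filter (fun v => v ∈ δ)).card ≤ δ.card := by
                      apply Finset.card_le_card
                      intro v hv
                      exact (Finset.mem_filter.mp hv).2
                    by_cases hd0 : δ.card = 0
                    · simp [hd0]
                    · have hdpos : (0:ℚ) < (δ.card : ℚ) := by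
                        exact_mod_cast Nat.pos_of_ne_zero hd0
                      rw [mul_one_div, div_le_one hdpos]
                      exact_mod_cast hle
            calc q δ = (∑ v ∈ V, if v ∈ δ then Q v (δ.erase v) else 0) / (V.card : ℚ) := rfl
              _ ≤ 1 / (V.card : ℚ) := by
                  gcongr
              _ ≤ 1/(δ.card + 1) := by
                  apply one_div_le_one_div_of_le
                  · positivity
                  · exact_mod_cast hcard
      exact ⟨q, hnonneg, hsupp, hsum, hbound, fun _ => hqV⟩

end AuxPrivacy

/-- A relation with no blank columns and more attributes than individuals cannot
preserve attribute privacy. -/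
theorem too_many_attributes {X Y : Type*} [Fintype X] [Fintype Y]
    (R : Set (X × Y))
    (hcol : ∀ y : Y, ∃ x : X, (x, y) ∈ R)
    (hX : 1 ≤ Fintype.card X)
    (hlt : Fintype.card X < Fintype.card Y) :
    ∃ γ : Set Y, ((psiR R γ).Nonempty ∨ γ = ∅) ∧ phiR R (psiR R γ) ≠ γ := by
  by_contra hcon
  push_neg at hcon
  classical
  -- The family of finsets of attributes with nonempty extent.
  set D : Finset (Finset Y) :=
    univ.filter (fun γ : Finset Y => (psiR R (γ : Set Y)).Nonempty) with hD
  have hmem_psi : ∀ (γ : Finset Y) (x : X), x ∈ psiR R (γ : Set Y) ↔ ∀ y ∈ γ, (x, y) ∈ R := by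
    intro γ x
    simp [psiR]
  have hmemD : ∀ γ : Finset Y, γ ∈ D ↔ (psiR R (γ : Set Y)).Nonempty := by
    intro γ; simp [hD]
  have hDdown : ∀ s ∈ D, ∀ t, t ⊆ s → t ∈ D := by
    intro s hs t hts
    rw [hmemD] at hs ⊢
    obtain ⟨x, hx⟩ := hs
    rw [hmem_psi] at hx
    exact ⟨x, (hmem_psi t x).mpr (fun y hy => hx y (hts hy))⟩
  have hsing : ∀ y : Y, ({y} : Finset Y) ∈ D := by
    intro y
    obtain ⟨x, hx⟩ := hcol y
    rw [hmemD]
    refine ⟨x, (hmem_psi {y} x).mpr ?_⟩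
    intro y' hy'
    rw [Finset.mem_singleton] at hy'
    subst hy'
    exact hx
  set FreeD : Finset (Finset Y) :=
    univ.filter (fun γ : Finset Y => γ ∈ D ∧ γ.Nonempty ∧ (extF D γ).card ≤ 1) with hFreeD
  -- Step B : each free set is realized exactly as a row of `R`, giving an
  -- injection from `FreeD` into `X`.
  have hBex : ∀ γ ∈ FreeD, ∃ x : X, ∀ y : Y, (x, y) ∈ R ↔ y ∈ γ := by
    intro γ hγ
    rw [hFreeD, Finset.mem_filter] at hγ
    obtain ⟨-, hγD, hγne, hγext⟩ := hγ
    have hψ : (psiR R (γ : Set Y)).Nonempty := (hmemD γ).mp hγD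
    have hmain : ∃ x ∈ psiR R (γ : Set Y), ∀ y, y ∉ γ → (x, y) ∉ R := by
      by_contra hno
      push_neg at hno
      have hψ' := hψ
      obtain ⟨x₀, hx₀⟩ := hψ'
      obtain ⟨y₁, hy₁γ, hy₁R⟩ := hno x₀ hx₀
      have hy₁ext : y₁ ∈ extF D γ := by
        simp only [extF, Finset.mem_filter, Finset.mem_univ, true_and]
        refine ⟨hy₁γ, ?_⟩
        rw [hmemD]
        refine ⟨x₀, (hmem_psi _ x₀).mpr ?_⟩
        intro y hy
        rcases Finset.mem_insert.mp hy with h | h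
        · subst h; exact hy₁R
        · exact (hmem_psi γ x₀).mp hx₀ y h
      have hy₁φ : y₁ ∈ phiR R (psiR R (γ : Set Y)) := by
        intro x hx
        obtain ⟨y₂, hy₂γ, hy₂R⟩ := hno x hx
        have hy₂ext : y₂ ∈ extF D γ := by
          simp only [extF, Finset.mem_filter, Finset.mem_univ, true_and]
          refine ⟨hy₂γ, ?_⟩
          rw [hmemD]
          refine ⟨x, (hmem_psi _ x).mpr ?_⟩
          intro y hy
          rcases Finset.mem_insert.mp hy with h | h
          · subst h; exact hy₂R
          · exact (hmem_psi γ x).mp hx y h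
        have : y₂ = y₁ := Finset.card_le_one.mp hγext y₂ hy₂ext y₁ hy₁ext
        exact this ▸ hy₂R
      have heq := hcon (γ : Set Y) (Or.inl hψ)
      rw [heq] at hy₁φ
      exact hy₁γ (Finset.mem_coe.mp hy₁φ)
    obtain ⟨x, hxψ, hxno⟩ := hmain
    refine ⟨x, fun y => ⟨?_, ?_⟩⟩
    · intro hR
      by_contra hy
      exact hxno y hy hR
    · intro hy
      exact (hmem_psi γ x).mp hxψ y hy
  have hXne : Nonempty X := Fintype.card_pos_iff.mp (by omega)
  obtain ⟨x₀⟩ := hXne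
  have hgex : ∀ γ : Finset Y, ∃ x : X, γ ∈ FreeD → ∀ y : Y, (x, y) ∈ R ↔ y ∈ γ := by
    intro γ
    by_cases hγ : γ ∈ FreeD
    · obtain ⟨x, hx⟩ := hBex γ hγ
      exact ⟨x, fun _ => hx⟩
    · exact ⟨x₀, fun h => absurd h hγ⟩
  choose g hg using hgex
  have hB : FreeD.card ≤ Fintype.card X := by
    rw [← Finset.card_univ (α := X)]
    apply Finset.card_le_card_of_injOn g (fun _ _ => Finset.mem_univ _)
    intro γ₁ h₁ γ₂ h₂ he
    apply Finset.ext
    intro y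
    rw [← hg γ₁ h₁ y, he, hg γ₂ h₂ y]
  -- Step A : there are at least `card Y` free sets.
  have key : ∀ y : Y, (1:ℚ) ≤ ∑ γ ∈ FreeD.filter (fun γ => y ∈ γ), 1/(γ.card : ℚ) := by
    intro y
    have hLdown := by
      exact fun s hs t hts =>
        (by
          intro v s hs t hts
          simp only [linkF, Finset.mem_filter, Finset.mem_univ, true_and] at hs ⊢
          exact ⟨fun h => hs.1 (hts h),
            hDdown _ hs.2 _ (Finset.insert_subset_insert v hts)⟩ : ∀ v : Y, ∀ s ∈ linkF D v,
              ∀ t, t ⊆ s → t ∈ linkF D v) y s hs t hts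
    have hLne : (linkF D y).Nonempty := by
      refine ⟨∅, ?_⟩
      simp only [linkF, Finset.mem_filter, Finset.mem_univ, true_and]
      refine ⟨Finset.notMem_empty y, ?_⟩
      rw [Finset.insert_empty]
      exact hsing y
    obtain ⟨q, hq0, hqsupp, hqsum, hqle, -⟩ :=
      aux_S (Fintype.card Y) (linkF D y)
        (le_trans (Finset.card_le_univ _) (Finset.card_univ (α := Y)).le) hLdown hLne
    set FreeL : Finset (Finset Y) :=
      univ.filter (fun δ : Finset Y => δ ∈ linkF D y ∧ (extF (linkF D y) δ).card ≤ 1) with hFreeL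
    have h2 : (∑ δ : Finset Y, q δ) = ∑ δ ∈ FreeL, q δ := by
      rw [← Finset.sum_filter_add_sum_filter_not univ
        (fun δ : Finset Y => δ ∈ linkF D y ∧ (extF (linkF D y) δ).card ≤ 1) q]
      have hzero : (∑ δ ∈ univ.filter
          (fun δ : Finset Y => ¬(δ ∈ linkF D y ∧ (extF (linkF D y) δ).card ≤ 1)), q δ) = 0 := by
        apply Finset.sum_eq_zero
        intro δ hδ
        simp only [Finset.mem_filter, Finset.mem_univ, true_and] at hδ
        by_contra h0
        exact hδ (hqsupp δ h0)
      rw [hzero, add_zero]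
    have h3 : (∑ δ ∈ FreeL, q δ) ≤ ∑ δ ∈ FreeL, 1/((δ.card : ℚ) + 1) :=
      Finset.sum_le_sum (fun δ _ => hqle δ)
    have h4 : (∑ δ ∈ FreeL, 1/((δ.card : ℚ) + 1))
        = ∑ γ ∈ FreeD.filter (fun γ => y ∈ γ), 1/(γ.card : ℚ) := by
      apply Finset.sum_nbij' (i := fun δ => insert y δ) (j := fun γ => γ.erase y)
      · intro δ hδ
        rw [hFreeL, Finset.mem_filter] at hδ
        obtain ⟨-, hδL, hδext⟩ := hδ
        simp only [linkF, Finset.mem_filter, Finset.mem_univ, true_and] at hδL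
        rw [Finset.mem_filter, hFreeD, Finset.mem_filter]
        refine ⟨⟨Finset.mem_univ _, hδL.2, Finset.insert_nonempty y δ, ?_⟩,
          Finset.mem_insert_self y δ⟩
        rw [extF_insert D y (insert y δ) (Finset.mem_insert_self y δ),
          Finset.erase_insert hδL.1]
        exact hδext
      · intro γ hγ
        rw [Finset.mem_filter, hFreeD, Finset.mem_filter] at hγ
        obtain ⟨⟨-, hγD, -, hγext⟩, hyγ⟩ := hγ
        rw [hFreeL, Finset.mem_filter]
        refine ⟨Finset.mem_univ _, ?_, ?_⟩
        · simp only [linkF, Finset.mem_filter, Finset.mem_univ, true_and]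
          refine ⟨Finset.notMem_erase y γ, ?_⟩
          rw [Finset.insert_erase hyγ]
          exact hγD
        · rw [← extF_insert D y γ hyγ]
          exact hγext
      · intro δ hδ
        rw [hFreeL, Finset.mem_filter] at hδ
        have : y ∉ δ := by
          have := hδ.2.1
          simp only [linkF, Finset.mem_filter, Finset.mem_univ, true_and] at this
          exact this.1
        exact Finset.erase_insert this
      · intro γ hγ
        rw [Finset.mem_filter] at hγ
        exact Finset.insert_erase hγ.2
      · intro δ hδ
        rw [hFreeL, Finset.mem_filter] at hδ
        have hyδ : y ∉ δ := by
          have := hδ.2.1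
          simp only [linkF, Finset.mem_filter, Finset.mem_univ, true_and] at this
          exact this.1
        rw [Finset.card_insert_of_notMem hyδ]
        push_cast
        ring_nf
    calc (1:ℚ) = ∑ δ : Finset Y, q δ := hqsum.symm
      _ = ∑ δ ∈ FreeL, q δ := h2
      _ ≤ ∑ δ ∈ FreeL, 1/((δ.card : ℚ) + 1) := h3
      _ = ∑ γ ∈ FreeD.filter (fun γ => y ∈ γ), 1/(γ.card : ℚ) := h4
  have hA : Fintype.card Y ≤ FreeD.card := by
    have hQle : (Fintype.card Y : ℚ) ≤ (FreeD.card : ℚ) := by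
      calc (Fintype.card Y : ℚ) = ∑ _y : Y, (1:ℚ) := by simp
        _ ≤ ∑ y : Y, ∑ γ ∈ FreeD.filter (fun γ => y ∈ γ), 1/(γ.card : ℚ) :=
            Finset.sum_le_sum (fun y _ => key y)
        _ = ∑ y : Y, ∑ γ ∈ FreeD, (if y ∈ γ then 1/(γ.card : ℚ) else 0) := by
            apply Finset.sum_congr rfl
            intro y _
            rw [Finset.sum_filter]
        _ = ∑ γ ∈ FreeD, ∑ y : Y, (if y ∈ γ then 1/(γ.card : ℚ) else 0) := by
            rw [Finset.sum_comm]
        _ = ∑ γ ∈ FreeD, (1:ℚ) := by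
            apply Finset.sum_congr rfl
            intro γ hγ
            have hγne : γ.Nonempty := by
              rw [hFreeD, Finset.mem_filter] at hγ
              exact hγ.2.2.1
            have hcard0 : ((γ.card : ℚ)) ≠ 0 := by
              have := Finset.card_pos.mpr hγne
              positivity
            rw [← Finset.sum_filter]
            have hfil : univ.filter (fun y : Y => y ∈ γ) = γ := by
              ext y; simp
            rw [hfil, Finset.sum_const, nsmul_eq_mul, mul_one_div, div_self hcard0]
        _ = (FreeD.card : ℚ) := by
            rw [Finset.sum_const, nsmul_eq_mul, mul_one]
    exact_mod_cast hQle
  omega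
end

section
/- Let R be a relation on X × Y with |X| > 1, and let x ∈ X be uniquely identifiable via R (ψ_R(Y_x) = {x}). Let X̃ = ⋃_{y∈Y_x} (X_y \ {x}) and let Q = R restricted to X̃ × Y_x. Then R preserves attribute privacy for x (i.e., (φ_R∘ψ_R)(γ) = γ for all γ ⊆ Y_x) if and only if Φ_Q equals the boundary complex ∂(Y_x), i.e., the simplices of Φ_Q are exactly the proper subsets of Y_x. -/
/-- The individuals of the link of x: X̃ = ⋃_{y ∈ Y_x} (X_y \ {x}). -/
def linkIndiv {X Y : Type*} (R : Set (X × Y)) (x : X) : Set X :=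
  {x' | x' ≠ x ∧ ∃ y ∈ rowSet R x, (x', y) ∈ R}

/-- The Dowker attribute complex of the relation Q modeling Lk(Ψ_R, x):
Q is R restricted to X̃ × Y_x, with the convention Φ_Q = {∅} when X̃ = ∅. -/
def linkPhi {X Y : Type*} (R : Set (X × Y)) (x : X) : Set (Set Y) :=
  {γ | γ ⊆ rowSet R x ∧
    (γ = ∅ ∨ ∃ x' ∈ linkIndiv R x, ∀ y ∈ γ, (x', y) ∈ R)}

/-- Individual attribute privacy characterization: a uniquely identifiable
individual x has full attribute privacy iff Φ_Q is the boundary complex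
∂(Y_x), i.e. the simplices of Φ_Q are exactly the proper subsets of Y_x. -/
theorem individual_privacy_iff_boundary {X Y : Type*} [Fintype X] [Fintype Y]
    (R : Set (X × Y)) (hX : 1 < Fintype.card X) (x : X)
    (hYx : (rowSet R x).Nonempty)
    (hid : psiR R (rowSet R x) = {x}) :
    (∀ γ : Set Y, γ ⊆ rowSet R x → phiR R (psiR R γ) = γ) ↔
    linkPhi R x = {γ : Set Y | γ ⊂ rowSet R x} := by
  have hxmem : ∀ γ : Set Y, γ ⊆ rowSet R x → x ∈ psiR R γ :=
    fun γ hγ y hy => hγ hy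
  constructor
  · intro hpriv
    ext γ
    simp only [linkPhi, Set.mem_setOf_eq]
    constructor
    · rintro ⟨hsub, hcase⟩
      refine ssubset_of_subset_of_ne hsub ?_
      intro heq
      rcases hcase with rfl | ⟨x', ⟨hx'ne, -⟩, hall⟩
      · exact hYx.ne_empty heq.symm
      · have hx' : x' ∈ psiR R (rowSet R x) := by
          intro y hy; exact hall y (heq ▸ hy)
        rw [hid] at hx'
        exact hx'ne hx'
    · intro hss
      refine ⟨hss.subset, ?_⟩
      rcases eq_or_ne γ ∅ with rfl | hne
      · exact Or.inl rfl
      right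
      obtain ⟨y0, hy0x, hy0γ⟩ := Set.exists_of_ssubset hss
      have hp := hpriv γ hss.subset
      have hy0 : y0 ∉ phiR R (psiR R γ) := by rw [hp]; exact hy0γ
      simp only [phiR, Set.mem_setOf_eq, not_forall] at hy0
      obtain ⟨x', hx'ψ, hx'y0⟩ := hy0
      obtain ⟨y1, hy1⟩ := Set.nonempty_iff_ne_empty.mpr hne
      refine ⟨x', ⟨?_, y1, hss.subset hy1, hx'ψ y1 hy1⟩, hx'ψ⟩
      rintro rfl
      exact hx'y0 hy0x
  · intro hbnd γ hγ
    apply Set.Subset.antisymm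
    · intro y hy
      have hyYx : y ∈ rowSet R x := hy x (hxmem γ hγ)
      by_contra hyγ
      have hfull : rowSet R x ∉ linkPhi R x := by
        rw [hbnd]
        exact fun h => (ssubset_irrefl (rowSet R x)) (Set.mem_setOf_eq.mp h)
      have hτss : rowSet R x \ {y} ⊂ rowSet R x :=
        Set.sdiff_singleton_ssubset.mpr hyYx
      have hτ : rowSet R x \ {y} ∈ linkPhi R x := by
        rw [hbnd]; exact hτss
      have hγτ : γ ⊆ rowSet R x \ {y} := fun z hz =>
        ⟨hγ hz, fun h => hyγ (h ▸ hz)⟩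
      rcases hτ.2 with hτe | ⟨x', hx'lk, hall⟩
      · -- rowSet R x \ {y} = ∅, so γ = ∅ ; pick any x' ≠ x
        obtain ⟨x', hx'ne⟩ := Fintype.exists_ne_of_one_lt_card hX x
        have hγe : γ = ∅ := Set.subset_eq_empty hγτ hτe
        have hx'ψ : x' ∈ psiR R γ := by
          subst hγe; intro z hz; exact absurd hz (Set.notMem_empty z)
        have hR : (x', y) ∈ R := hy x' hx'ψ
        apply hfull
        refine ⟨Set.Subset.refl _, Or.inr ⟨x', ⟨hx'ne, y, hyYx, hR⟩, ?_⟩⟩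
        intro z hz
        have : z ∈ rowSet R x \ {y} ∨ z = y := by
          by_cases h : z = y
          · exact Or.inr h
          · exact Or.inl ⟨hz, h⟩
        rcases this with h | rfl
        · exact absurd h (hτe ▸ Set.notMem_empty z)
        · exact hR
      · -- witness x' covering τ; since γ ⊆ τ, x' ∈ psiR γ, so (x',y) ∈ R,
        -- hence x' covers all of rowSet R x, contradicting hfull
        have hx'ψ : x' ∈ psiR R γ := fun z hz => hall z (hγτ hz)
        have hR : (x', y) ∈ R := hy x' hx'ψ
        apply hfull
        refine ⟨Set.Subset.refl _, Or.inr ⟨x', hx'lk, ?_⟩⟩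
        intro z hz
        by_cases h : z = y
        · exact h ▸ hR
        · exact hall z ⟨hz, h⟩
    · intro y hy x' hx'
      exact hx' y hy
end

section
/- Let R be a relation on nonempty finite sets X and Y, and suppose {(σ_k, γ_k) < ⋯ < (σ_1, γ_1) < (σ_0, γ_0)} with k ≥ 1 is a maximal chain in the Galois lattice P⁺_R (so σ_i = ψ_R(γ_i), γ_i = φ_R(σ_i), σ_i ⊊ σ_{i-1}, γ_i ⊋ γ_{i-1}, σ_0 = X, γ_k = Y). Choose y_i ∈ γ_i \ γ_{i-1} for each i = 1,…,k. Then (φ_R ∘ ψ_R)({y_1,…,y_i}) = γ_i for each i = 0,1,…,k; in particular y_i ∉ (φ_R∘ψ_R)({y_1,…,y_{i-1}}) for all i, so y_1,…,y_k is an informative attribute release sequence for R. -/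
lemma psiR_anti {X Y : Type*} (R : Set (X × Y)) {γ₁ γ₂ : Set Y} (h : γ₁ ⊆ γ₂) :
    psiR R γ₂ ⊆ psiR R γ₁ := fun x hx y hy => hx y (h hy)

lemma phiR_anti {X Y : Type*} (R : Set (X × Y)) {σ₁ σ₂ : Set X} (h : σ₁ ⊆ σ₂) :
    phiR R σ₂ ⊆ phiR R σ₁ := fun y hy x hx => hy x (h hx)

lemma subset_phiR_psiR {X Y : Type*} (R : Set (X × Y)) (S : Set Y) :
    S ⊆ phiR R (psiR R S) := fun y hy x hx => hx y hy

lemma subset_psiR_phiR {X Y : Type*} (R : Set (X × Y)) (S : Set X) :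
    S ⊆ psiR R (phiR R S) := fun x hx y hy => hy x hx

lemma psiR_phiR_psiR {X Y : Type*} (R : Set (X × Y)) (S : Set Y) :
    psiR R (phiR R (psiR R S)) = psiR R S :=
  Set.Subset.antisymm (psiR_anti R (subset_phiR_psiR R S)) (subset_psiR_phiR R (psiR R S))

/-- Informative attributes from maximal chains: given a maximal chain
(σ_k, γ_k) < ⋯ < (σ_0, γ_0) in the Galois lattice P⁺_R and choices
y_i ∈ γ_i \ γ_{i-1}, the closure of {y_1,…,y_i} is exactly γ_i for each i;
in particular y_1,…,y_k is an informative attribute release sequence. -/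
theorem informative_from_maximal_chain {X Y : Type*} [Fintype X] [Fintype Y]
    [Nonempty X] [Nonempty Y] (R : Set (X × Y)) (k : ℕ) (hk : 1 ≤ k)
    (σ : ℕ → Set X) (γ : ℕ → Set Y)
    (hclosed : ∀ i ≤ k, σ i = psiR R (γ i) ∧ γ i = phiR R (σ i))
    (htop : σ 0 = Set.univ) (hbot : γ k = Set.univ)
    (hchain : ∀ i, 1 ≤ i → i ≤ k → σ i ⊂ σ (i - 1))
    (hmaximal : ∀ i, 1 ≤ i → i ≤ k → ∀ τ : Set X, τ = psiR R (phiR R τ) →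
        σ i ⊆ τ → τ ⊆ σ (i - 1) → τ = σ i ∨ τ = σ (i - 1))
    (y : ℕ → Y) (hy : ∀ i, 1 ≤ i → i ≤ k → y i ∈ γ i \ γ (i - 1)) :
    (∀ i ≤ k, phiR R (psiR R (y '' {j | 1 ≤ j ∧ j ≤ i})) = γ i) ∧
    (∀ i, 1 ≤ i → i ≤ k →
      y i ∉ phiR R (psiR R (y '' {j | 1 ≤ j ∧ j ≤ i - 1}))) := by
  -- σ is monotone decreasing
  have hσmono : ∀ j i, j ≤ i → i ≤ k → σ i ⊆ σ j := by
    intro j i hji hik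
    induction i with
    | zero =>
        have : j = 0 := Nat.le_zero.mp hji
        subst this; exact subset_rfl
    | succ n ih =>
      rcases Nat.lt_or_ge j (n+1) with h | h
      · have h1 : σ (n+1) ⊆ σ n := by
          have := hchain (n+1) (Nat.le_add_left 1 n) hik
          simpa using this.subset
        exact h1.trans (ih (Nat.lt_succ_iff.mp h) (Nat.le_of_succ_le hik))
      · have : j = n + 1 := le_antisymm hji h
        subst this; exact subset_rfl
  have hγmono : ∀ j i, j ≤ i → i ≤ k → γ j ⊆ γ i := by
    intro j i hji hik
    rw [(hclosed j (hji.trans hik)).2, (hclosed i hik).2]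
    exact phiR_anti R (hσmono j i hji hik)
  -- main claim by induction
  have main : ∀ i ≤ k, phiR R (psiR R (y '' {j | 1 ≤ j ∧ j ≤ i})) = γ i := by
    intro i
    induction i with
    | zero =>
      intro _
      have : (y '' {j | 1 ≤ j ∧ j ≤ 0}) = (∅ : Set Y) := by
        ext z; simp
      rw [this]
      have hψ : psiR R (∅ : Set Y) = Set.univ := by
        ext x; simp [psiR]
      rw [hψ, ← htop, ← (hclosed 0 (Nat.zero_le k)).2]
    | succ n ih =>
      intro hnk
      have hnk' : n ≤ k := Nat.le_of_succ_le hnk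
      have ihn := ih hnk'
      -- S_{n+1} ⊆ γ (n+1)
      have hsub : y '' {j | 1 ≤ j ∧ j ≤ n + 1} ⊆ γ (n + 1) := by
        rintro z ⟨j, ⟨hj1, hj2⟩, rfl⟩
        exact hγmono j (n+1) hj2 hnk ((hy j hj1 (hj2.trans hnk)).1)
      set S : Set Y := y '' {j | 1 ≤ j ∧ j ≤ n + 1} with hS
      set τ : Set X := psiR R S with hτ
      have hτclosed : τ = psiR R (phiR R τ) := (psiR_phiR_psiR R S).symm
      have hστ : σ (n+1) ⊆ τ := by
        rw [(hclosed (n+1) hnk).1]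
        exact psiR_anti R hsub
      have hSn : y '' {j | 1 ≤ j ∧ j ≤ n} ⊆ S := by
        apply Set.image_mono
        intro j hj; exact ⟨hj.1, hj.2.trans (Nat.le_succ n)⟩
      have hτσn : τ ⊆ σ n := by
        have h1 : τ ⊆ psiR R (y '' {j | 1 ≤ j ∧ j ≤ n}) := psiR_anti R hSn
        have h2 : psiR R (y '' {j | 1 ≤ j ∧ j ≤ n}) = σ n := by
          have := congrArg (psiR R) ihn
          rw [psiR_phiR_psiR] at this
          rw [this]
          exact (hclosed n hnk').1.symm
        rw [← h2]; exact h1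
      have := hmaximal (n+1) (Nat.le_add_left 1 n) hnk τ hτclosed hστ (by simpa using hτσn)
      rcases this with h | h
      · show phiR R (psiR R S) = γ (n+1)
        rw [hτ.symm.trans h]
        exact ((hclosed (n+1) hnk).2).symm
      · exfalso
        have hyn := hy (n+1) (Nat.le_add_left 1 n) hnk
        simp only [Nat.add_sub_cancel] at hyn
        have hyS : y (n+1) ∈ S := ⟨n+1, ⟨Nat.le_add_left 1 n, le_refl _⟩, rfl⟩
        simp only [Nat.add_sub_cancel] at h
        have hmem : y (n+1) ∈ phiR R τ := subset_phiR_psiR R S hyS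
        rw [h, ← (hclosed n hnk').2] at hmem
        exact hyn.2 hmem
  refine ⟨main, ?_⟩
  intro i hi1 hik
  rw [main (i-1) (le_trans (Nat.sub_le i 1) hik)]
  exact (hy i hi1 hik).2
end

section
/- Let R be a relation on X × Y and suppose ∅ ≠ γ ∈ Φ_R with σ = ψ_R(γ) and |γ| = k ≥ 1. Then the following are equivalent: (a) γ is isotropic, i.e., every ordering of the elements of γ is an informative attribute release sequence for R; (b) γ is minimally identifying for σ, i.e., ψ_R(γ) = σ and ψ_R(γ') ⊋ σ for every γ' ⊊ γ. -/
/-- Isotropy = minimal identification: for a nonempty simplex γ of Φ_R with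
σ = ψ_R(γ), every ordering of γ is an informative attribute release sequence
iff γ is minimally identifying for σ (every proper subset of γ has strictly
larger ψ-image). -/
theorem isotropic_iff_minimally_identifying {X Y : Type*}
    [Fintype X] [Fintype Y] [Nonempty X] [Nonempty Y] [DecidableEq Y]
    (R : Set (X × Y)) (γ : Finset Y) (hne : γ.Nonempty)
    (hsimp : (psiR R (↑γ : Set Y)).Nonempty) :
    (∀ l : List Y, l.Nodup → l.toFinset = γ →
      ∀ i : Fin l.length,
        l.get i ∉ phiR R (psiR R (((l.take (i : ℕ)).toFinset : Finset Y) : Set Y))) ↔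
    (∀ γ' : Finset Y, γ' ⊂ γ →
      psiR R (↑γ : Set Y) ⊂ psiR R (↑γ' : Set Y)) := by
  constructor
  · intro h γ' hss
    have hsub : psiR R (↑γ : Set Y) ⊆ psiR R (↑γ' : Set Y) := by
      intro x hx y hy
      exact hx y (hss.1 hy)
    refine ⟨hsub, fun hsub' => ?_⟩
    obtain ⟨y, hyγ, hyγ'⟩ := Finset.exists_of_ssubset hss
    set l := γ'.toList ++ (γ \ γ').toList with hl
    have hnd : l.Nodup := by
      refine List.Nodup.append γ'.nodup_toList (γ \ γ').nodup_toList ?_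
      intro a ha hb
      exact (Finset.mem_sdiff.mp (Finset.mem_toList.mp hb)).2 (Finset.mem_toList.mp ha)
    have htf : l.toFinset = γ := by
      simp only [hl, List.toFinset_append, Finset.toList_toFinset]
      exact Finset.union_sdiff_of_subset hss.1
    have hlen : γ'.card < l.length := by
      have hy : y ∈ γ \ γ' := Finset.mem_sdiff.mpr ⟨hyγ, hyγ'⟩
      have := Finset.card_pos.mpr ⟨y, hy⟩
      simp only [hl, List.length_append, Finset.length_toList]
      omega
    have hmain := h l hnd htf ⟨γ'.card, hlen⟩
    apply hmain
    have htake : l.take γ'.card = γ'.toList := by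
      conv_lhs => rw [hl, ← Finset.length_toList γ']
      exact List.take_left
    have hz : l.get ⟨γ'.card, hlen⟩ ∈ γ := by
      rw [← htf]
      exact List.mem_toFinset.mpr (List.get_mem l _)
    intro x hx
    rw [htake] at hx
    simp only [Finset.toList_toFinset] at hx
    exact hsub' hx _ hz
  · intro h l hnd htf i hmem
    set y := l.get i with hy
    have hyγ : y ∈ γ := by
      rw [← htf]; exact List.mem_toFinset.mpr (List.get_mem l _)
    have hss : γ.erase y ⊂ γ := Finset.erase_ssubset hyγ
    have hstrict := h _ hss
    apply hstrict.2
    intro x hx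
    have hP : ∀ a ∈ (l.take (i : ℕ)).toFinset, a ∈ γ.erase y := by
      intro a ha
      have ha' : a ∈ l.take (i : ℕ) := List.mem_toFinset.mp ha
      have haγ : a ∈ γ := by
        rw [← htf]
        exact List.mem_toFinset.mpr (List.mem_of_mem_take ha')
      refine Finset.mem_erase.mpr ⟨?_, haγ⟩
      intro hay
      -- a = y = l.get i, but a ∈ take i, contradiction with nodup
      obtain ⟨j, hj, hja⟩ := List.getElem_of_mem ha'
      have hj' : j < (i : ℕ) := by
        have := hj; simp [List.length_take] at this; omega
      have hjl : j < l.length := hj'.trans i.isLt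
      have heq : l[j]'hjl = l[(i : ℕ)]'i.isLt := by
        rw [← List.getElem_take (h := hj), hja, hay, hy]
        rfl
      have := (hnd.getElem_inj_iff).mp heq
      omega
    have hxP : x ∈ psiR R (((l.take (i : ℕ)).toFinset : Finset Y) : Set Y) := by
      intro a ha
      exact hx a (hP a ha)
    intro z hz
    by_cases hzy : z = y
    · subst hzy; exact hmem x hxP
    · exact hx z (Finset.mem_erase.mpr ⟨hzy, hz⟩)
end

section
/- Suppose Y consists of k binary attribute pairs {y_1, ȳ_1, …, y_k, ȳ_k} (k ≥ 1), and R is a relation on X × Y with X nonempty, in which every individual x has exactly one attribute from each pair {y_i, ȳ_i}, and all rows Y_x are distinct. Then R preserves attribute privacy if and only if |X| = 2^k (i.e., all 2^k possible attribute combinations are represented). -/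
/-- Privacy requires many individuals: with k binary attribute pairs (attributes
(i, true) and (i, false) for i : Fin k), where every individual has exactly one
attribute from each pair and all rows are distinct, R preserves attribute
privacy iff all 2^k possible attribute combinations are represented. -/
theorem binary_pairs_privacy_iff_card {X : Type*} [Fintype X] [Nonempty X]
    (k : ℕ) (hk : 1 ≤ k) (R : Set (X × (Fin k × Bool)))
    (hexact : ∀ (x : X) (i : Fin k),
      Xor' ((x, (i, true)) ∈ R) ((x, (i, false)) ∈ R))
    (hdistinct : ∀ x x' : X, rowSet R x = rowSet R x' → x = x') :
    AttrPrivacy R ↔ Fintype.card X = 2 ^ k := by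
  classical
  set f : X → (Fin k → Bool) := fun x i => if (x, (i, true)) ∈ R then true else false with hf
  have hmem : ∀ (x : X) (i : Fin k) (b : Bool), ((x, (i, b)) ∈ R) ↔ f x i = b := by
    intro x i b
    have h := hexact x i
    rcases h with ⟨h1, h2⟩ | ⟨h1, h2⟩ <;> cases b <;> simp [hf, h1, h2]
  have hinj : Function.Injective f := by
    intro x x' hxx'
    apply hdistinct
    ext ⟨i, b⟩
    simp only [rowSet, Set.mem_setOf_eq]
    rw [hmem, hmem, hxx']
  have hcard : Fintype.card X = 2 ^ k ↔ Function.Surjective f := by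
    constructor
    · intro h
      have : Fintype.card X = Fintype.card (Fin k → Bool) := by simp [h]
      exact ((Fintype.bijective_iff_injective_and_card f).2 ⟨hinj, this⟩).surjective
    · intro h
      have := Fintype.card_of_bijective ⟨hinj, h⟩
      simpa using this
  rw [hcard]
  constructor
  · -- privacy → surjective
    intro hpriv g
    by_contra hg
    push_neg at hg
    set T : Finset (Fin k × Bool) := Finset.univ.image (fun i => (i, g i)) with hT
    set P := T.powerset.filter (fun s : Finset (Fin k × Bool) => (psiR R (↑s : Set (Fin k × Bool))).Nonempty) with hPdef
    have hP : (∅ : Finset (Fin k × Bool)) ∈ P := by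
      simp only [hPdef, Finset.mem_filter, Finset.empty_mem_powerset, true_and]
      exact ⟨Classical.arbitrary X, by intro y hy; simp at hy⟩
    obtain ⟨s, hsP, hmax⟩ := P.exists_max_image Finset.card ⟨∅, hP⟩
    have hsT : s ⊆ T := by
      have := (Finset.mem_filter.1 hsP).1
      exact Finset.mem_powerset.1 this
    have hsne : (psiR R ↑s).Nonempty := (Finset.mem_filter.1 hsP).2
    have hsneT : s ≠ T := by
      intro hEq
      obtain ⟨x, hx⟩ := hsne
      apply hg x
      funext i
      refine (hmem x i (g i)).1 (hx _ ?_)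
      rw [hEq]
      simp [hT]
    obtain ⟨y, hyT, hys⟩ := Finset.exists_of_ssubset (hsT.ssubset_of_ne hsneT)
    obtain ⟨i, -, hy_eq⟩ := Finset.mem_image.1 hyT
    have hins : ¬ (psiR R ↑(insert y s)).Nonempty := by
      intro hne
      have hmem' : insert y s ∈ P := by
        refine Finset.mem_filter.2 ⟨Finset.mem_powerset.2 ?_, hne⟩
        exact Finset.insert_subset hyT hsT
      have := hmax _ hmem'
      rw [Finset.card_insert_of_notMem hys] at this
      omega
    have hy'φ : ((i, !(g i)) : Fin k × Bool) ∈ phiR R (psiR R ↑s) := by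
      intro x hx
      have hnot : (x, (i, g i)) ∉ R := by
        intro hcon
        apply hins
        refine ⟨x, ?_⟩
        intro z hz
        simp only [Finset.coe_insert, Set.mem_insert_iff] at hz
        rcases hz with rfl | hz
        · rw [← hy_eq]; exact hcon
        · exact hx _ hz
      have hne' : f x i ≠ g i := fun h => hnot ((hmem x i (g i)).2 h)
      have hflip : f x i = !(g i) := by
        revert hne'
        cases g i <;> cases f x i <;> simp
      exact (hmem x i (!(g i))).2 hflip
    have hy's : ((i, !(g i)) : Fin k × Bool) ∉ (↑s : Set (Fin k × Bool)) := by
      intro hmem'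
      have := hsT hmem'
      simp only [hT, Finset.mem_image, Finset.mem_univ, true_and, Prod.mk.injEq] at this
      obtain ⟨j, hj1, hj2⟩ := this
      subst hj1
      simp at hj2
    have heq := hpriv ↑s (Or.inl hsne)
    rw [heq] at hy'φ
    exact hy's hy'φ
  · -- surjective → privacy
    intro hsurj γ hγ
    apply Set.Subset.antisymm
    · rintro ⟨i, b⟩ hy
      by_contra hyγ
      rcases hγ with hne | he
      · obtain ⟨x, hx⟩ := hne
        obtain ⟨x', hx'⟩ := hsurj (Function.update (f x) i (!b))
        have hx'ψ : x' ∈ psiR R γ := by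
          rintro ⟨j, b'⟩ hy'
          have hj : j ≠ i := by
            rintro rfl
            have hb' : f x j = b' := (hmem x j b').1 (hx _ hy')
            have hb : f x j = b := (hmem x j b).1 (hy x hx)
            rw [hb] at hb'; subst hb'
            exact hyγ hy'
          have hfx' : f x' j = f x j := by
            rw [hx', Function.update_of_ne hj]
          exact (hmem x' j b').2 (by rw [hfx']; exact (hmem x j b').1 (hx _ hy'))
        have : f x' i = b := (hmem x' i b).1 (hy x' hx'ψ)
        rw [hx'] at this
        simp at this
      · subst he
        obtain ⟨x', hx'⟩ := hsurj (fun _ => !b)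
        have hψ : x' ∈ psiR R (∅ : Set (Fin k × Bool)) := by
          intro y hy'; simp at hy'
        have : f x' i = b := (hmem x' i b).1 (hy x' hψ)
        rw [hx'] at this
        simp at this
    · intro y hy x hx
      exact hx y hy
end
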